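/- Under CDF-based scheduling with feedback reduction (threshold p^α for a user with access ratio α), the conditional SNR distribution of the user given it is selected is F_Sel(γ) = p^{1-α} F(γ) for 0 < γ < F⁻¹(p^α), and F_Sel(γ) = [F(γ)]^{1/α} for γ ≥ F⁻¹(p^α). -/

import Mathlib

open MeasureTheory ProbabilityTheory Set
open scoped ENNReal

lemma cdf_pos_lt_one {F : ℝ → ℝ} (hFmono : StrictMono F)
    (hF01 : ∀ x, F x ∈ Set.Icc (0:ℝ) 1) (t : ℝ) : 0 < F t ∧ F t < 1 :=
  ⟨lt_of_le_of_lt (hF01 (t-1)).1 (hFmono (by linarith)),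
   lt_of_lt_of_le (hFmono (lt_add_one t)) (hF01 (t+1)).2⟩

lemma cdf_surj {Ω : Type*} [MeasurableSpace Ω] (μ : Measure Ω) [IsProbabilityMeasure μ]
    (g : Ω → ℝ) (hg : Measurable g) (F : ℝ → ℝ) (hFmono : StrictMono F) (hFcont : Continuous F)
    (hcdf : ∀ x, μ {ω | g ω ≤ x} = ENNReal.ofReal (F x))
    {u : ℝ} (hu0 : 0 < u) (hu1 : u < 1) : ∃ t, F t = u := by
  have hup : ∃ t₁ : ℝ, u < F t₁ := by
    by_contra h
    push_neg at h
    have hmon : Monotone (fun k : ℕ => {ω | g ω ≤ (k:ℝ)}) := by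
      intro k l hkl ω hω
      simp only [Set.mem_setOf_eq] at *
      exact le_trans hω (by exact_mod_cast hkl)
    have hU : (⋃ k : ℕ, {ω | g ω ≤ (k:ℝ)}) = Set.univ := by
      ext ω; simp only [Set.mem_iUnion, Set.mem_univ, iff_true, Set.mem_setOf_eq]
      exact exists_nat_ge (g ω)
    have h1 : (1:ℝ≥0∞) = ⨆ k : ℕ, μ {ω | g ω ≤ (k:ℝ)} := by
      rw [← hmon.measure_iUnion, hU, measure_univ]
    have hle : (1:ℝ≥0∞) ≤ ENNReal.ofReal u := by
      rw [h1]
      exact iSup_le fun k => by rw [hcdf]; exact ENNReal.ofReal_le_ofReal (h k)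
    have := ENNReal.one_le_ofReal.mp hle
    linarith
  have hdown : ∃ t₀ : ℝ, F t₀ < u := by
    by_contra h
    push_neg at h
    have hanti : Directed (· ⊇ ·) (fun k : ℕ => {ω | g ω ≤ -(k:ℝ)}) := by
      intro k l
      refine ⟨max k l, fun ω hω => ?_, fun ω hω => ?_⟩ <;>
        simp only [Set.mem_setOf_eq] at * <;>
        refine le_trans hω ?_ <;>
        · simp only [neg_le_neg_iff, Nat.cast_le]
          omega
    have hI : (⋂ k : ℕ, {ω | g ω ≤ -(k:ℝ)}) = ∅ := by
      ext ω; simp only [Set.mem_iInter, Set.mem_setOf_eq, Set.mem_empty_iff_false, iff_false]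
      push_neg
      obtain ⟨k, hk⟩ := exists_nat_gt (-g ω)
      exact ⟨k, by linarith⟩
    have h0 : (0:ℝ≥0∞) = ⨅ k : ℕ, μ {ω | g ω ≤ -(k:ℝ)} := by
      rw [← Directed.measure_iInter
        (fun k : ℕ => (measurableSet_le hg measurable_const).nullMeasurableSet)
        hanti ⟨0, measure_ne_top μ _⟩, hI, measure_empty]
    have hge : ENNReal.ofReal u ≤ (0:ℝ≥0∞) := by
      rw [h0]
      exact le_iInf fun k => by rw [hcdf]; exact ENNReal.ofReal_le_ofReal (h _)
    have : ENNReal.ofReal u = 0 := le_antisymm hge (zero_le)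
    rw [ENNReal.ofReal_eq_zero] at this
    linarith
  obtain ⟨t₁, ht₁⟩ := hup
  obtain ⟨t₀, ht₀⟩ := hdown
  have ht : t₀ ≤ t₁ := le_of_lt (hFmono.lt_iff_lt.mp (by linarith))
  obtain ⟨t, _, htu⟩ := intermediate_value_Icc ht hFcont.continuousOn
    ⟨le_of_lt ht₀, le_of_lt ht₁⟩
  exact ⟨t, htu⟩

lemma cdf_map {Ω : Type*} [MeasurableSpace Ω] (μ : Measure Ω) [IsProbabilityMeasure μ]
    (g : Ω → ℝ) (hg : Measurable g) (F : ℝ → ℝ) (hFmono : StrictMono F) (hFcont : Continuous F)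
    (hF01 : ∀ x, F x ∈ Set.Icc (0:ℝ) 1)
    (hcdf : ∀ x, μ {ω | g ω ≤ x} = ENNReal.ofReal (F x)) :
    (μ.map g).map F = volume.restrict (Set.Ioo (0:ℝ) 1) := by
  · -- proof

    have : IsProbabilityMeasure (μ.map g) := Measure.isProbabilityMeasure_map hg.aemeasurable
    have : IsProbabilityMeasure ((μ.map g).map F) :=
      Measure.isProbabilityMeasure_map hFcont.measurable.aemeasurable
    refine MeasureTheory.Measure.ext_of_Iic _ _ fun a => ?_
    rw [Measure.map_apply hFcont.measurable measurableSet_Iic,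
      Measure.map_apply hg (hFcont.measurable measurableSet_Iic)]
    have hpre : g ⁻¹' (F ⁻¹' Iic a) = {ω | F (g ω) ≤ a} := rfl
    rcases le_or_gt 1 a with ha | ha
    · have h1 : g ⁻¹' (F ⁻¹' Iic a) = Set.univ := by
        ext ω
        simpa using le_trans (le_of_lt (cdf_pos_lt_one hFmono hF01 (g ω)).2) ha
      rw [h1, measure_univ, Measure.restrict_apply measurableSet_Iic]
      have : Ioo (0:ℝ) 1 ⊆ Iic a := fun s hs => le_trans (le_of_lt hs.2) ha
      rw [Set.inter_eq_right.mpr this, Real.volume_Ioo]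
      simp
    rcases le_or_gt a 0 with ha0 | ha0
    · have h1 : g ⁻¹' (F ⁻¹' Iic a) = ∅ := by
        ext ω
        simpa using lt_of_le_of_lt ha0 (cdf_pos_lt_one hFmono hF01 (g ω)).1
      rw [h1, measure_empty, Measure.restrict_apply measurableSet_Iic]
      have h2 : Iic a ∩ Ioo (0:ℝ) 1 = ∅ :=
        Set.eq_empty_iff_forall_notMem.mpr fun s hs => by
          simp only [mem_inter_iff, mem_Iic, mem_Ioo] at hs
          linarith [hs.1, hs.2.1]
      rw [h2, measure_empty]
    · obtain ⟨t, ht⟩ := cdf_surj μ g hg F hFmono hFcont hcdf ha0 ha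
      have h1 : g ⁻¹' (F ⁻¹' Iic a) = {ω | g ω ≤ t} := by
        ext ω
        simp only [mem_preimage, mem_Iic, mem_setOf_eq, ← ht, hFmono.le_iff_le]
      rw [h1, hcdf, ht, Measure.restrict_apply measurableSet_Iic]
      have : Iic a ∩ Ioo (0:ℝ) 1 = Ioc 0 a := by
        ext s
        simp only [mem_inter_iff, mem_Iic, mem_Ioo, mem_Ioc]
        constructor
        · rintro ⟨h1, h2, h3⟩; exact ⟨h2, h1⟩
        · rintro ⟨h1, h2⟩; exact ⟨h2, h1, lt_of_le_of_lt h2 ha⟩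
      rw [this, Real.volume_Ioc, sub_zero]

lemma cdf_law {Ω : Type*} [MeasurableSpace Ω] (μ : Measure Ω) [IsProbabilityMeasure μ]
    (g : Ω → ℝ) (hg : Measurable g) (F : ℝ → ℝ) (hFmono : StrictMono F) (hFcont : Continuous F)
    (hF01 : ∀ x, F x ∈ Set.Icc (0:ℝ) 1)
    (hcdf : ∀ x, μ {ω | g ω ≤ x} = ENNReal.ofReal (F x))
    {A : Set ℝ} (hA : MeasurableSet A) :
    μ {ω | F (g ω) ∈ A} = (volume.restrict (Set.Ioo (0:ℝ) 1)) A := by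
  rw [show {ω | F (g ω) ∈ A} = g ⁻¹' (F ⁻¹' A) from rfl,
    ← Measure.map_apply hg (hFcont.measurable hA),
    ← Measure.map_apply hFcont.measurable hA,
    cdf_map μ g hg F hFmono hFcont hF01 hcdf]

lemma lint_rpow {a b c : ℝ} (ha : 0 < a) (hab : a ≤ b) (hc : 0 ≤ c) :
    ∫⁻ s in Set.Ioc a b, ENNReal.ofReal (s ^ c) =
      ENNReal.ofReal ((b ^ (c+1) - a ^ (c+1)) / (c+1)) := by
  have hcont : ContinuousOn (fun s : ℝ => s ^ c) (Set.Icc a b) := fun s hs =>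
    (Real.continuousAt_rpow_const s c
      (Or.inl (ne_of_gt (lt_of_lt_of_le ha hs.1)))).continuousWithinAt
  have hint : IntegrableOn (fun s : ℝ => s ^ c) (Set.Ioc a b) volume :=
    (hcont.integrableOn_Icc).mono_set Set.Ioc_subset_Icc_self
  rw [← ofReal_integral_eq_lintegral_ofReal hint
    (Filter.eventually_of_mem (self_mem_ae_restrict measurableSet_Ioc)
      (fun s hs => Real.rpow_nonneg (le_of_lt (lt_trans ha hs.1)) c))]
  congr 1
  rw [← intervalIntegral.integral_of_le hab, integral_rpow (Or.inl (by linarith))]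

lemma key_lt {ww t z : ℝ} (hww : 0 < ww) (ht : 0 ≤ t) (hz : 0 ≤ z) :
    t ^ (1 / ww) < z ↔ t < z ^ ww := by
  rw [← Real.rpow_lt_rpow_iff (Real.rpow_nonneg ht _) hz hww, one_div,
    Real.rpow_inv_rpow ht hww.ne']

lemma key_gt {ww t z : ℝ} (hww : 0 < ww) (ht : 0 ≤ t) (hz : 0 ≤ z) :
    z < t ^ (1 / ww) ↔ z ^ ww < t := by
  rw [← Real.rpow_lt_rpow_iff hz (Real.rpow_nonneg ht _) hww, one_div,
    Real.rpow_inv_rpow ht hww.ne']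

theorem cdf_scheduling_feedback_reduction_selected_distribution
    {Ω : Type*} [MeasurableSpace Ω]
    (μ : Measure Ω) [IsProbabilityMeasure μ] (n : ℕ)
    (γ : Fin n → Ω → ℝ) (hγmeas : ∀ j, Measurable (γ j))
    (hindep : iIndepFun (m := fun _ => Real.measurableSpace) γ μ)
    (F : Fin n → ℝ → ℝ)
    (hFmono : ∀ j, StrictMono (F j)) (hFcont : ∀ j, Continuous (F j))
    (hF01 : ∀ j x, F j x ∈ Set.Icc (0 : ℝ) 1)
    (hcdf : ∀ j x, μ {ω | γ j ω ≤ x} = ENNReal.ofReal (F j x))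
    (w : Fin n → ℝ) (hw : ∀ j, 0 < w j)
    (p : ℝ) (hp : p ∈ Set.Ioo (0 : ℝ) 1)
    (η : ℝ) (hη : η = p ^ (1 / ∑ j, w j))
    (V : Ω → Fin n) (hVmeas : Measurable V)
    (hVindep : IndepFun (fun ω j => γ j ω) V μ)
    (hVlaw : ∀ j, μ {ω | V ω = j} = ENNReal.ofReal (w j / ∑ k, w k))
    (i : Fin n) (α : ℝ) (hα : α = w i / ∑ j, w j) :
    ∀ x : ℝ,
      (F i x < p ^ α →
        μ ({ω | γ i ω ≤ x} ∩
            (({ω | η < (F i (γ i ω)) ^ (1 / w i) ∧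
                ∀ j, j ≠ i → (F j (γ j ω)) ^ (1 / w j) < (F i (γ i ω)) ^ (1 / w i)}) ∪
              ({ω | ∀ j, (F j (γ j ω)) ^ (1 / w j) < η} ∩ {ω | V ω = i}))) /
          μ (({ω | η < (F i (γ i ω)) ^ (1 / w i) ∧
                ∀ j, j ≠ i → (F j (γ j ω)) ^ (1 / w j) < (F i (γ i ω)) ^ (1 / w i)}) ∪
              ({ω | ∀ j, (F j (γ j ω)) ^ (1 / w j) < η} ∩ {ω | V ω = i}))
          = ENNReal.ofReal (p ^ (1 - α) * F i x)) ∧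
      (p ^ α ≤ F i x →
        μ ({ω | γ i ω ≤ x} ∩
            (({ω | η < (F i (γ i ω)) ^ (1 / w i) ∧
                ∀ j, j ≠ i → (F j (γ j ω)) ^ (1 / w j) < (F i (γ i ω)) ^ (1 / w i)}) ∪
              ({ω | ∀ j, (F j (γ j ω)) ^ (1 / w j) < η} ∩ {ω | V ω = i}))) /
          μ (({ω | η < (F i (γ i ω)) ^ (1 / w i) ∧
                ∀ j, j ≠ i → (F j (γ j ω)) ^ (1 / w j) < (F i (γ i ω)) ^ (1 / w i)}) ∪
              ({ω | ∀ j, (F j (γ j ω)) ^ (1 / w j) < η} ∩ {ω | V ω = i}))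
          = ENNReal.ofReal ((F i x) ^ (1 / α))) := by
  intro x
  obtain ⟨hp0, hp1⟩ := hp
  have hWpos : 0 < ∑ j, w j := Finset.sum_pos (fun j _ => hw j) ⟨i, Finset.mem_univ i⟩
  have hwW : w i ≤ ∑ j, w j := Finset.single_le_sum (fun j _ => (hw j).le) (Finset.mem_univ i)
  have hαpos : 0 < α := hα ▸ div_pos (hw i) hWpos
  have hα1 : α ≤ 1 := hα ▸ (div_le_one hWpos).mpr hwW
  have hη0 : 0 < η := hη ▸ Real.rpow_pos_of_pos hp0 _
  have hη1 : η < 1 := hη ▸ Real.rpow_lt_one hp0.le hp1 (by positivity)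
  have ha0 : 0 < p ^ α := Real.rpow_pos_of_pos hp0 α
  have ha1 : p ^ α < 1 := Real.rpow_lt_one hp0.le hp1 hαpos
  have hFpos : ∀ j t, 0 < F j t := fun j t => (cdf_pos_lt_one (hFmono j) (hF01 j) t).1
  have hFlt1 : ∀ j t, F j t < 1 := fun j t => (cdf_pos_lt_one (hFmono j) (hF01 j) t).2
  have hηw : ∀ j, η ^ w j = p ^ (w j / ∑ k, w k) := by
    intro j
    rw [hη, ← Real.rpow_mul hp0.le, one_div, inv_mul_eq_div]
  have hηwi : η ^ w i = p ^ α := by rw [hηw i, hα]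
  set B : Set Ω := {ω | η < F i (γ i ω) ^ (1 / w i) ∧
      ∀ j, j ≠ i → F j (γ j ω) ^ (1 / w j) < F i (γ i ω) ^ (1 / w i)} with hBdef
  set E : Set Ω := {ω | ∀ j, F j (γ j ω) ^ (1 / w j) < η} with hEdef
  set Vi : Set Ω := {ω | V ω = i} with hVidef
  set G : Set Ω := {ω | γ i ω ≤ x} with hGdef
  -- measurability
  have hZm : ∀ j, Measurable (fun ω => F j (γ j ω) ^ (1 / w j)) := fun j =>
    (Real.continuous_rpow_const (one_div_nonneg.mpr (hw j).le)).measurable.comp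
      ((hFcont j).measurable.comp (hγmeas j))
  have hBm : MeasurableSet B := by
    have : B = {ω | η < F i (γ i ω) ^ (1 / w i)} ∩
        ⋂ j, {ω | j ≠ i → F j (γ j ω) ^ (1 / w j) < F i (γ i ω) ^ (1 / w i)} := by
      ext ω; simp [hBdef, Set.mem_iInter]
    rw [this]
    refine (measurableSet_lt measurable_const (hZm i)).inter (MeasurableSet.iInter fun j => ?_)
    by_cases hj : j = i
    · simp [hj]
    · simp only [hj, ne_eq, not_false_eq_true, forall_true_left]
      exact measurableSet_lt (hZm j) (hZm i)
  have hEm : MeasurableSet E := by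
    have : E = ⋂ j, {ω | F j (γ j ω) ^ (1 / w j) < η} := by
      ext ω; simp [hEdef, Set.mem_iInter]
    rw [this]
    exact MeasurableSet.iInter fun j => measurableSet_lt (hZm j) measurable_const
  have hVim : MeasurableSet Vi := hVmeas (measurableSet_singleton i)
  have hEVim : MeasurableSet (E ∩ Vi) := hEm.inter hVim
  have hdisj : Disjoint B (E ∩ Vi) := by
    rw [Set.disjoint_left]
    intro ω hB hEV
    exact absurd (lt_trans hB.1 (hEV.1 i)) (lt_irrefl η)
  classical
  -- law transfer
  have hlaw : ∀ (j : Fin n) (A : Set ℝ), MeasurableSet A →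
      μ (γ j ⁻¹' (F j ⁻¹' A)) = (volume.restrict (Set.Ioo (0:ℝ) 1)) A := fun j A hA =>
    cdf_law μ (γ j) (hγmeas j) (F j) (hFmono j) (hFcont j) (hF01 j) (hcdf j) hA
  have hμZ : ∀ (j : Fin n) (v : ℝ), 0 < v → v ≤ 1 →
      μ (γ j ⁻¹' (F j ⁻¹' Set.Iio v)) = ENNReal.ofReal v := by
    intro j v hv0 hv1
    rw [hlaw j _ measurableSet_Iio, Measure.restrict_apply measurableSet_Iio]
    have h1 : Set.Iio v ∩ Set.Ioo 0 1 = Set.Ioo 0 v := by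
      ext s
      simp only [Set.mem_inter_iff, Set.mem_Iio, Set.mem_Ioo]
      constructor
      · rintro ⟨h1, h2, h3⟩; exact ⟨h2, h1⟩
      · rintro ⟨h1, h2⟩; exact ⟨h2, h1, lt_of_lt_of_le h2 hv1⟩
    rw [h1, Real.volume_Ioo, sub_zero]
  -- μ E
  have hEeq : E = ⋂ j, γ j ⁻¹' (F j ⁻¹' Set.Iio (η ^ w j)) := by
    ext ω
    simp only [hEdef, Set.mem_setOf_eq, Set.mem_iInter, Set.mem_preimage, Set.mem_Iio]
    exact forall_congr' fun j => key_lt (hw j) (hFpos j _).le hη0.le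
  have hμE : μ E = ENNReal.ofReal p := by
    rw [hEeq, hindep.meas_iInter (fun j => ⟨F j ⁻¹' Set.Iio (η ^ w j),
      (hFcont j).measurable measurableSet_Iio, rfl⟩)]
    have h1 : ∀ j : Fin n, μ (γ j ⁻¹' (F j ⁻¹' Set.Iio (η ^ w j))) =
        ENNReal.ofReal (p ^ (w j / ∑ k, w k)) := fun j => by
      rw [hμZ j _ (Real.rpow_pos_of_pos hη0 _)
        (Real.rpow_le_one hη0.le hη1.le (hw j).le), hηw j]
    rw [Finset.prod_congr rfl fun j _ => h1 j,
      ← ENNReal.ofReal_prod_of_nonneg fun j _ => (Real.rpow_pos_of_pos hp0 _).le,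
      ← Real.rpow_sum_of_pos hp0]
    rw [← Finset.sum_div, div_self hWpos.ne', Real.rpow_one]
  -- μ Vi and μ (E ∩ Vi)
  have hμVi : μ Vi = ENNReal.ofReal α := by
    rw [hα]
    exact hVlaw i
  have hSEm : MeasurableSet {y : Fin n → ℝ | ∀ j, F j (y j) ^ (1 / w j) < η} := by
    have h1 : {y : Fin n → ℝ | ∀ j, F j (y j) ^ (1 / w j) < η} =
        ⋂ j, {y : Fin n → ℝ | F j (y j) ^ (1 / w j) < η} := by
      ext y; simp [Set.mem_iInter]
    rw [h1]
    exact MeasurableSet.iInter fun j => measurableSet_lt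
      ((Real.continuous_rpow_const (one_div_nonneg.mpr (hw j).le)).measurable.comp
        ((hFcont j).measurable.comp (measurable_pi_apply j))) measurable_const
  have hμEVi : μ (E ∩ Vi) = ENNReal.ofReal (p * α) := by
    have h1 : E ∩ Vi = (fun ω (j : Fin n) => γ j ω) ⁻¹'
        {y | ∀ j, F j (y j) ^ (1 / w j) < η} ∩ V ⁻¹' {i} := rfl
    rw [h1, hVindep.measure_inter_preimage_eq_mul _ _ hSEm (measurableSet_singleton i)]
    have h2 : (fun ω (j : Fin n) => γ j ω) ⁻¹'
        {y | ∀ j, F j (y j) ^ (1 / w j) < η} = E := rfl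
    have h3 : V ⁻¹' {i} = Vi := rfl
    rw [h2, h3, hμE, hμVi, ← ENNReal.ofReal_mul hp0.le]
  -- Fubini: the feedback event
  have hvecT : Measurable (fun ω (j : ({i}ᶜ : Finset (Fin n))) => γ (j : Fin n) ω) :=
    measurable_pi_lambda _ fun j => hγmeas j
  have hIF : IndepFun (γ i) (fun ω (j : ({i}ᶜ : Finset (Fin n))) => γ (j : Fin n) ω) μ := by
    have h := hindep.indepFun_finset {i} {i}ᶜ disjoint_compl_right hγmeas
    have h2 := h.comp
      (φ := fun v : (({i} : Finset (Fin n)) : Type) → ℝ => v ⟨i, Finset.mem_singleton_self i⟩)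
      (ψ := id) (_mγ := Real.measurableSpace) (measurable_pi_apply _) measurable_id
    exact h2
  have hmap2 : μ.map (fun ω => (γ i ω, fun (j : ({i}ᶜ : Finset (Fin n))) => γ (j : Fin n) ω)) =
      (μ.map (γ i)).prod (μ.map (fun ω (j : ({i}ᶜ : Finset (Fin n))) => γ (j : Fin n) ω)) :=
    (indepFun_iff_map_prod_eq_prod_map_map (hγmeas i).aemeasurable hvecT.aemeasurable).mp hIF
  have hSliceLaw : ∀ z : ℝ, 0 < z → z < 1 →
      (μ.map (fun ω (j : ({i}ᶜ : Finset (Fin n))) => γ (j : Fin n) ω))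
        {y | ∀ j : ({i}ᶜ : Finset (Fin n)), F (j : Fin n) (y j) ^ (1 / w (j : Fin n)) < z}
        = ENNReal.ofReal (z ^ (∑ j ∈ ({i}ᶜ : Finset (Fin n)), w j)) := by
    intro z hz0 hz1
    have hsm : MeasurableSet {y : (({i}ᶜ : Finset (Fin n)) : Type) → ℝ |
        ∀ j : ({i}ᶜ : Finset (Fin n)), F (j : Fin n) (y j) ^ (1 / w (j : Fin n)) < z} := by
      have h1 : {y : (({i}ᶜ : Finset (Fin n)) : Type) → ℝ |
          ∀ j : ({i}ᶜ : Finset (Fin n)), F (j : Fin n) (y j) ^ (1 / w (j : Fin n)) < z} =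
          ⋂ j : ({i}ᶜ : Finset (Fin n)),
            {y | F (j : Fin n) (y j) ^ (1 / w (j : Fin n)) < z} := by
        ext y; simp [Set.mem_iInter]
      rw [h1]
      exact MeasurableSet.iInter fun j => measurableSet_lt
        ((Real.continuous_rpow_const (one_div_nonneg.mpr (hw _).le)).measurable.comp
          ((hFcont _).measurable.comp (measurable_pi_apply j))) measurable_const
    rw [Measure.map_apply hvecT hsm]
    have hpre : (fun ω (j : ({i}ᶜ : Finset (Fin n))) => γ (j : Fin n) ω) ⁻¹'
        {y | ∀ j : ({i}ᶜ : Finset (Fin n)), F (j : Fin n) (y j) ^ (1 / w (j : Fin n)) < z}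
        = ⋂ j ∈ ({i}ᶜ : Finset (Fin n)), γ j ⁻¹' (F j ⁻¹' Set.Iio (z ^ w j)) := by
      ext ω
      simp only [Set.mem_preimage, Set.mem_setOf_eq, Set.mem_iInter, Set.mem_Iio]
      constructor
      · intro h j hj
        exact (key_lt (hw j) (hFpos j _).le hz0.le).mp (h ⟨j, hj⟩)
      · intro h j
        exact (key_lt (hw _) (hFpos _ _).le hz0.le).mpr (h j j.2)
    rw [hpre, hindep.meas_biInter (fun j hj => ⟨F j ⁻¹' Set.Iio (z ^ w j),
      (hFcont j).measurable measurableSet_Iio, rfl⟩)]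
    have h1 : ∀ j ∈ ({i}ᶜ : Finset (Fin n)), μ (γ j ⁻¹' (F j ⁻¹' Set.Iio (z ^ w j))) =
        ENNReal.ofReal (z ^ w j) := fun j _ =>
      hμZ j _ (Real.rpow_pos_of_pos hz0 _) (Real.rpow_le_one hz0.le hz1.le (hw j).le)
    rw [Finset.prod_congr rfl h1,
      ← ENNReal.ofReal_prod_of_nonneg fun j _ => (Real.rpow_pos_of_pos hz0 _).le,
      ← Real.rpow_sum_of_pos hz0]
  have hBA : ∀ A : Set ℝ, MeasurableSet A →
      μ (B ∩ (γ i ⁻¹' (F i ⁻¹' A))) =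
        ∫⁻ s in A ∩ Set.Ioi (p ^ α) ∩ Set.Ioo (0:ℝ) 1,
          ENNReal.ofReal (s ^ ((∑ j ∈ ({i}ᶜ : Finset (Fin n)), w j) / w i)) := by
    intro A hA
    set c : ℝ := (∑ j ∈ ({i}ᶜ : Finset (Fin n)), w j) / w i with hcdef
    have hcnn : 0 ≤ c := div_nonneg (Finset.sum_nonneg fun j _ => (hw j).le) (hw i).le
    set S2 : Set (ℝ × ((({i}ᶜ : Finset (Fin n)) : Type) → ℝ)) :=
      {q | (F i q.1 ∈ A ∧ η < F i q.1 ^ (1 / w i)) ∧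
        ∀ j : ({i}ᶜ : Finset (Fin n)),
          F (j : Fin n) (q.2 j) ^ (1 / w (j : Fin n)) < F i q.1 ^ (1 / w i)} with hS2def
    have hm1 : Measurable fun q : ℝ × ((({i}ᶜ : Finset (Fin n)) : Type) → ℝ) => F i q.1 :=
      (hFcont i).measurable.comp measurable_fst
    have hm2 : Measurable fun q : ℝ × ((({i}ᶜ : Finset (Fin n)) : Type) → ℝ) =>
        F i q.1 ^ (1 / w i) :=
      (Real.continuous_rpow_const (one_div_nonneg.mpr (hw i).le)).measurable.comp hm1
    have hS2m : MeasurableSet S2 := by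
      rw [hS2def, Set.setOf_and, Set.setOf_and]
      refine ((hm1 hA).inter (measurableSet_lt measurable_const hm2)).inter ?_
      have h1 : {q : ℝ × ((({i}ᶜ : Finset (Fin n)) : Type) → ℝ) |
          ∀ j : ({i}ᶜ : Finset (Fin n)),
            F (j : Fin n) (q.2 j) ^ (1 / w (j : Fin n)) < F i q.1 ^ (1 / w i)} =
          ⋂ j : ({i}ᶜ : Finset (Fin n)),
            {q | F (j : Fin n) (q.2 j) ^ (1 / w (j : Fin n)) < F i q.1 ^ (1 / w i)} := by
        ext q; simp [Set.mem_iInter]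
      rw [h1]
      exact MeasurableSet.iInter fun j => measurableSet_lt
        ((Real.continuous_rpow_const (one_div_nonneg.mpr (hw _).le)).measurable.comp
          ((hFcont _).measurable.comp ((measurable_pi_apply j).comp measurable_snd))) hm2
    have hpre : B ∩ (γ i ⁻¹' (F i ⁻¹' A)) =
        (fun ω => (γ i ω, fun (j : ({i}ᶜ : Finset (Fin n))) => γ (j : Fin n) ω)) ⁻¹' S2 := by
      ext ω
      simp only [hS2def, hBdef, Set.mem_inter_iff, Set.mem_preimage, Set.mem_setOf_eq]
      constructor
      · rintro ⟨⟨h1, h2⟩, h3⟩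
        exact ⟨⟨h3, h1⟩, fun j => h2 j (Finset.notMem_singleton.mp (Finset.mem_compl.mp j.2))⟩
      · rintro ⟨⟨h1, h2⟩, h3⟩
        exact ⟨⟨h2, fun j hj => h3 ⟨j, Finset.mem_compl.mpr (Finset.notMem_singleton.mpr hj)⟩⟩, h1⟩
    have hprob : IsProbabilityMeasure
        (μ.map (fun ω (j : ({i}ᶜ : Finset (Fin n))) => γ (j : Fin n) ω)) :=
      Measure.isProbabilityMeasure_map hvecT.aemeasurable
    rw [hpre, ← Measure.map_apply ((hγmeas i).prodMk hvecT) hS2m, hmap2,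
      Measure.prod_apply hS2m]
    have hintg : ∀ t : ℝ, (μ.map (fun ω (j : ({i}ᶜ : Finset (Fin n))) => γ (j : Fin n) ω))
        (Prod.mk t ⁻¹' S2) = Set.indicator (A ∩ Set.Ioi (p ^ α))
          (fun s => ENNReal.ofReal (s ^ c)) (F i t) := by
      intro t
      by_cases h : F i t ∈ A ∧ η < F i t ^ (1 / w i)
      · have hz0 : 0 < F i t ^ (1 / w i) := Real.rpow_pos_of_pos (hFpos i t) _
        have hz1 : F i t ^ (1 / w i) < 1 :=
          Real.rpow_lt_one (hFpos i t).le (hFlt1 i t) (one_div_pos.mpr (hw i))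
        have hsl : Prod.mk t ⁻¹' S2 = {y | ∀ j : ({i}ᶜ : Finset (Fin n)),
            F (j : Fin n) (y j) ^ (1 / w (j : Fin n)) < F i t ^ (1 / w i)} := by
          ext y
          simp only [hS2def, Set.mem_preimage, Set.mem_setOf_eq]
          exact ⟨fun hh => hh.2, fun hh => ⟨h, hh⟩⟩
        rw [hsl, hSliceLaw _ hz0 hz1, Set.indicator_of_mem]
        · congr 1
          rw [← Real.rpow_mul (hFpos i t).le]
          congr 1
          rw [hcdef]
          ring
        · have h2 := (key_gt (hw i) (hFpos i t).le hη0.le).mp h.2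
          rw [hηwi] at h2
          exact ⟨h.1, h2⟩
      · have hsl : Prod.mk t ⁻¹' S2 = ∅ := by
          ext y
          simp only [hS2def, Set.mem_preimage, Set.mem_setOf_eq, Set.mem_empty_iff_false,
            iff_false]
          intro hh
          exact h hh.1
        rw [hsl, measure_empty, Set.indicator_of_notMem]
        intro hmem
        apply h
        refine ⟨hmem.1, ?_⟩
        have h2 := hmem.2
        rw [← hηwi] at h2
        exact (key_gt (hw i) (hFpos i t).le hη0.le).mpr h2
    have hgmeas : Measurable fun s : ℝ =>
        Set.indicator (A ∩ Set.Ioi (p ^ α)) (fun s => ENNReal.ofReal (s ^ c)) s := by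
      exact Measurable.indicator
        (ENNReal.measurable_ofReal.comp (Real.continuous_rpow_const hcnn).measurable)
        (hA.inter measurableSet_Ioi)
    rw [lintegral_congr hintg,
      ← lintegral_map hgmeas (hFcont i).measurable,
      cdf_map μ (γ i) (hγmeas i) (F i) (hFmono i) (hFcont i) (hF01 i) (hcdf i),
      lintegral_indicator (hA.inter measurableSet_Ioi),
      Measure.restrict_restrict (hA.inter measurableSet_Ioi)]
  have hsumT : ∑ j ∈ ({i}ᶜ : Finset (Fin n)), w j = (∑ j, w j) - w i := by
    have h1 := Finset.sum_compl_add_sum ({i} : Finset (Fin n)) w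
    simp only [Finset.sum_singleton] at h1
    linarith
  have hc1 : (∑ j ∈ ({i}ᶜ : Finset (Fin n)), w j) / w i + 1 = 1 / α := by
    rw [hsumT, hα, one_div_div, eq_div_iff (hw i).ne', add_mul,
      div_mul_cancel₀ _ (hw i).ne', one_mul]
    ring
  have hcnn : 0 ≤ (∑ j ∈ ({i}ᶜ : Finset (Fin n)), w j) / w i :=
    div_nonneg (Finset.sum_nonneg fun j _ => (hw j).le) (hw i).le
  have hμB : μ B = ENNReal.ofReal (α * (1 - p)) := by
    have h0 : B = B ∩ (γ i ⁻¹' (F i ⁻¹' Set.univ)) := by simp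
    rw [h0, hBA Set.univ MeasurableSet.univ]
    have h1 : Set.univ ∩ Set.Ioi (p ^ α) ∩ Set.Ioo (0:ℝ) 1 = Set.Ioo (p ^ α) 1 := by
      ext s
      simp only [Set.univ_inter, Set.mem_inter_iff, Set.mem_Ioi, Set.mem_Ioo]
      constructor
      · rintro ⟨h1, h2, h3⟩; exact ⟨h1, h3⟩
      · rintro ⟨h1, h2⟩; exact ⟨h1, lt_trans ha0 h1, h2⟩
    rw [h1, setLIntegral_congr Ioo_ae_eq_Ioc, lint_rpow ha0 ha1.le hcnn, hc1]
    congr 1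
    rw [Real.one_rpow, ← Real.rpow_mul hp0.le, mul_one_div, div_self hαpos.ne',
      Real.rpow_one, div_div_eq_mul_div, div_one]
    ring
  have hμGB : p ^ α ≤ F i x → μ (G ∩ B) =
      ENNReal.ofReal (α * (F i x ^ (1 / α) - p)) := by
    intro hge
    have h0 : G ∩ B = B ∩ (γ i ⁻¹' (F i ⁻¹' Set.Iic (F i x))) := by
      rw [Set.inter_comm]
      congr 1
      ext ω
      simp only [hGdef, Set.mem_setOf_eq, Set.mem_preimage, Set.mem_Iic]
      exact ((hFmono i).le_iff_le).symm
    rw [h0, hBA _ measurableSet_Iic]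
    have h1 : Set.Iic (F i x) ∩ Set.Ioi (p ^ α) ∩ Set.Ioo (0:ℝ) 1 =
        Set.Ioc (p ^ α) (F i x) := by
      ext s
      simp only [Set.mem_inter_iff, Set.mem_Iic, Set.mem_Ioi, Set.mem_Ioo, Set.mem_Ioc]
      constructor
      · rintro ⟨⟨h1, h2⟩, h3, h4⟩; exact ⟨h2, h1⟩
      · rintro ⟨h1, h2⟩; exact ⟨⟨h2, h1⟩, lt_trans ha0 h1, lt_of_le_of_lt h2 (hFlt1 i x)⟩
    rw [h1, lint_rpow ha0 hge hcnn, hc1]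
    congr 1
    rw [← Real.rpow_mul hp0.le, mul_one_div, div_self hαpos.ne', Real.rpow_one, div_div_eq_mul_div, div_one]
    ring
  have hμGE : F i x < p ^ α → μ ((G ∩ E) ∩ Vi) =
      ENNReal.ofReal ((F i x * p ^ (1 - α)) * α) := by
    intro hlt
    have hu0 : 0 < F i x := hFpos i x
    have hu1 : F i x < 1 := hFlt1 i x
    set D : Fin n → Set ℝ :=
      fun j => if j = i then Set.Iic (F i x) else Set.Iio (η ^ w j) with hDdef
    have hGE : G ∩ E = ⋂ j, γ j ⁻¹' (F j ⁻¹' D j) := by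
      ext ω
      simp only [hGdef, hEdef, Set.mem_inter_iff, Set.mem_setOf_eq, Set.mem_iInter,
        Set.mem_preimage]
      constructor
      · rintro ⟨h1, h2⟩ j
        by_cases hj : j = i
        · subst hj
          simp only [hDdef, if_pos rfl, Set.mem_Iic]
          exact (hFmono j).le_iff_le.mpr h1
        · simp only [hDdef, if_neg hj, Set.mem_Iio]
          exact (key_lt (hw j) (hFpos j _).le hη0.le).mp (h2 j)
      · intro h
        have hi' := h i
        simp only [hDdef, if_pos rfl, Set.mem_Iic] at hi'
        refine ⟨(hFmono i).le_iff_le.mp hi', fun j => ?_⟩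
        by_cases hj : j = i
        · subst hj
          refine (key_lt (hw j) (hFpos j _).le hη0.le).mpr ?_
          rw [hηwi]
          linarith
        · have hj' := h j
          simp only [hDdef, if_neg hj, Set.mem_Iio] at hj'
          exact (key_lt (hw j) (hFpos j _).le hη0.le).mpr hj'
    have hDm : ∀ j, MeasurableSet (D j) := fun j => by
      by_cases hj : j = i <;> simp [hDdef, hj, measurableSet_Iic, measurableSet_Iio]
    have hμGEset : μ (G ∩ E) = ENNReal.ofReal (F i x * p ^ (1 - α)) := by
      rw [hGE, hindep.meas_iInter (fun j => ⟨F j ⁻¹' D j, (hFcont j).measurable (hDm j), rfl⟩),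
        ← Finset.mul_prod_erase Finset.univ _ (Finset.mem_univ i)]
      have hterm_i : μ (γ i ⁻¹' (F i ⁻¹' D i)) = ENNReal.ofReal (F i x) := by
        have hD : D i = Set.Iic (F i x) := by simp [hDdef]
        rw [hD, hlaw i _ measurableSet_Iic, Measure.restrict_apply measurableSet_Iic]
        have h2 : Set.Iic (F i x) ∩ Set.Ioo 0 1 = Set.Ioc 0 (F i x) := by
          ext s
          simp only [Set.mem_inter_iff, Set.mem_Iic, Set.mem_Ioo, Set.mem_Ioc]
          constructor
          · rintro ⟨h1, h2, h3⟩; exact ⟨h2, h1⟩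
          · rintro ⟨h1, h2⟩; exact ⟨h2, h1, lt_of_le_of_lt h2 hu1⟩
        rw [h2, Real.volume_Ioc, sub_zero]
      have hterm : ∀ j ∈ Finset.univ.erase i, μ (γ j ⁻¹' (F j ⁻¹' D j)) =
          ENNReal.ofReal (p ^ (w j / ∑ k, w k)) := by
        intro j hj
        have hj' : j ≠ i := (Finset.mem_erase.mp hj).1
        have hD : D j = Set.Iio (η ^ w j) := by simp [hDdef, hj']
        rw [hD, hμZ j _ (Real.rpow_pos_of_pos hη0 _)
          (Real.rpow_le_one hη0.le hη1.le (hw j).le), hηw j]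
      rw [hterm_i, Finset.prod_congr rfl hterm,
        ← ENNReal.ofReal_prod_of_nonneg fun j _ => (Real.rpow_pos_of_pos hp0 _).le,
        ← Real.rpow_sum_of_pos hp0, ← ENNReal.ofReal_mul hu0.le]
      congr 2
      rw [← Finset.sum_div]
      have h3 : ∑ j ∈ Finset.univ.erase i, w j = (∑ j, w j) - w i := by
        have h4 := Finset.add_sum_erase Finset.univ w (Finset.mem_univ i)
        linarith
      rw [h3, hα]
      field_simp
    have hS'm : MeasurableSet {y : Fin n → ℝ | y i ≤ x ∧ ∀ j, F j (y j) ^ (1 / w j) < η} := by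
      rw [Set.setOf_and]
      exact (measurableSet_le (measurable_pi_apply i) measurable_const).inter hSEm
    have h2 : (G ∩ E) ∩ Vi = (fun ω (j : Fin n) => γ j ω) ⁻¹'
        {y | y i ≤ x ∧ ∀ j, F j (y j) ^ (1 / w j) < η} ∩ V ⁻¹' {i} := rfl
    rw [h2, hVindep.measure_inter_preimage_eq_mul _ _ hS'm (measurableSet_singleton i)]
    have h3 : (fun ω (j : Fin n) => γ j ω) ⁻¹'
        {y | y i ≤ x ∧ ∀ j, F j (y j) ^ (1 / w j) < η} = G ∩ E := rfl
    have h4 : V ⁻¹' {i} = Vi := rfl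
    rw [h3, h4, hμGEset, hμVi,
      ← ENNReal.ofReal_mul (mul_nonneg hu0.le (Real.rpow_pos_of_pos hp0 _).le)]
  have hden : μ (B ∪ E ∩ Vi) = ENNReal.ofReal α := by
    rw [measure_union hdisj hEVim, hμB, hμEVi, ← ENNReal.ofReal_add (by nlinarith) (mul_nonneg hp0.le hαpos.le)]
    congr 1; ring
  constructor
  · -- case F i x < p ^ α
    intro hlt
    have hnum : G ∩ (B ∪ E ∩ Vi) = (G ∩ E) ∩ Vi := by
      ext ω
      simp only [Set.mem_inter_iff, Set.mem_union, hGdef, Set.mem_setOf_eq]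
      constructor
      · rintro ⟨h1, h2 | h2⟩
        · exfalso
          have h3 : p ^ α < F i (γ i ω) := by
            rw [← hηwi]
            exact (key_gt (hw i) (hFpos i _).le hη0.le).mp h2.1
          have h4 : F i (γ i ω) ≤ F i x := (hFmono i).le_iff_le.mpr h1
          linarith
        · exact ⟨⟨h1, h2.1⟩, h2.2⟩
      · rintro ⟨⟨h1, h2⟩, h3⟩
        exact ⟨h1, Or.inr ⟨h2, h3⟩⟩
    have hαne : ENNReal.ofReal α ≠ 0 := by
      simp only [ne_eq, ENNReal.ofReal_eq_zero, not_le]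
      exact hαpos
    have hcancel : ∀ t : ℝ≥0∞, t * ENNReal.ofReal α / ENNReal.ofReal α = t := fun t => by
      rw [mul_div_assoc, ENNReal.div_self hαne ENNReal.ofReal_ne_top, mul_one]
    rw [hnum, hden, hμGE hlt,
      ENNReal.ofReal_mul (mul_nonneg (hFpos i x).le (Real.rpow_pos_of_pos hp0 _).le), hcancel]
    congr 1
    ring
  · intro hge
    have hup : p ≤ F i x ^ (1 / α) := by
      have := Real.rpow_le_rpow ha0.le hge (le_of_lt (by positivity : (0:ℝ) < 1/α))
      rwa [← Real.rpow_mul hp0.le, mul_one_div, div_self hαpos.ne', Real.rpow_one] at this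
    have hnum : G ∩ (B ∪ E ∩ Vi) = (G ∩ B) ∪ E ∩ Vi := by
      ext ω
      simp only [Set.mem_inter_iff, Set.mem_union, hGdef, Set.mem_setOf_eq]
      constructor
      · rintro ⟨h1, h2 | h2⟩
        · exact Or.inl ⟨h1, h2⟩
        · exact Or.inr h2
      · rintro (⟨h1, h2⟩ | h2)
        · exact ⟨h1, Or.inl h2⟩
        · refine ⟨?_, Or.inr h2⟩
          have h3 : F i (γ i ω) < p ^ α := by
            rw [← hηwi]
            exact (key_lt (hw i) (hFpos i _).le hη0.le).mp (h2.1 i)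
          exact le_of_lt ((hFmono i).lt_iff_lt.mp (by linarith [hge]))
    have hdisj2 : Disjoint (G ∩ B) (E ∩ Vi) := hdisj.mono_left Set.inter_subset_right
    rw [hnum, measure_union hdisj2 hEVim, hμGB hge, hμEVi, hden,
      ← ENNReal.ofReal_add (mul_nonneg hαpos.le (by linarith)) (mul_nonneg hp0.le hαpos.le)]
    have : α * (F i x ^ (1 / α) - p) + p * α = α * F i x ^ (1 / α) := by ring
    have hαne : ENNReal.ofReal α ≠ 0 := by
      simp only [ne_eq, ENNReal.ofReal_eq_zero, not_le]
      exact hαpos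
    have hcancel : ∀ t : ℝ≥0∞, t * ENNReal.ofReal α / ENNReal.ofReal α = t := fun t => by
      rw [mul_div_assoc, ENNReal.div_self hαne ENNReal.ofReal_ne_top, mul_one]
    rw [this, mul_comm, ENNReal.ofReal_mul (Real.rpow_nonneg (hF01 i x).1 _), hcancel]
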